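/- Under the k-means setup with ground-truth clusters U_r = C⁻¹(r) of size ≥ w·m, Δμ = min_{r≠s}‖μ_r − μ_s‖₂ > 0, and suppose for each r the nearest optimal center μ̂_r (after relabeling) satisfies ‖μ̂_r − μ_r‖₂ ≤ 0.1Δμ. Then the number of misclassified points in cluster r satisfies |U_r \ Ĉ⁻¹(r)| ≤ 5‖B − M‖_F²/Δμ², where Ĉ is the optimal k-means labeling and M has rows μ_{C(i)}. -/

import Mathlib

/-- Frobenius norm of a real matrix. -/
noncomputable def frobNorm {m n : ℕ} (A : Matrix (Fin m) (Fin n) ℝ) : ℝ :=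
  Real.sqrt (∑ i, ∑ j, (A i j) ^ 2)

/-- The `i`-th row of a matrix, viewed as a vector in Euclidean space. -/
def row {m n : ℕ} (A : Matrix (Fin m) (Fin n) ℝ) (i : Fin m) : EuclideanSpace ℝ (Fin n) :=
  WithLp.toLp 2 (fun j => A i j)

theorem kmeans_misclassification {m n k : ℕ}
    (C : Fin m → Fin k) (w : ℝ) (hw : 0 < w)
    (hsize : ∀ r : Fin k, w * m ≤ ((Finset.univ.filter fun i => C i = r).card : ℝ))
    (μ : Fin k → EuclideanSpace ℝ (Fin n)) (B : Matrix (Fin m) (Fin n) ℝ)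
    (Δ : ℝ) (hΔ : 0 < Δ)
    (hsep : ∀ r s : Fin k, r ≠ s → Δ ≤ ‖μ r - μ s‖)
    (μhat : Fin k → EuclideanSpace ℝ (Fin n)) (Chat : Fin m → Fin k)
    (hopt : ∀ (μ' : Fin k → EuclideanSpace ℝ (Fin n)) (C' : Fin m → Fin k),
      ∑ i, ‖row B i - μhat (Chat i)‖ ^ 2 ≤ ∑ i, ‖row B i - μ' (C' i)‖ ^ 2)
    (herr : ∀ r : Fin k, ‖μhat r - μ r‖ ≤ 0.1 * Δ)
    (M : Matrix (Fin m) (Fin n) ℝ) (hM : ∀ i j, M i j = μ (C i) j) :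
    ∀ r : Fin k,
      (((Finset.univ.filter fun i => C i = r ∧ Chat i ≠ r).card : ℝ))
        ≤ 5 * frobNorm (B - M) ^ 2 / Δ ^ 2 := by
  intro r
  have hrowM : ∀ i, row M i = μ (C i) := by
    intro i; ext j; exact hM i j
  set F2 : ℝ := ∑ i, ‖row B i - μ (C i)‖ ^ 2 with hF2def
  have hF2nonneg : 0 ≤ F2 := Finset.sum_nonneg fun i _ => by positivity
  have hfrob : frobNorm (B - M) ^ 2 = F2 := by
    unfold frobNorm
    rw [Real.sq_sqrt (by positivity)]
    refine Finset.sum_congr rfl fun i _ => ?_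
    rw [EuclideanSpace.norm_eq, Real.sq_sqrt (by positivity)]
    refine Finset.sum_congr rfl fun j _ => ?_
    rw [Real.norm_eq_abs, sq_abs]
    have : (row B i - μ (C i)) j = B i j - M i j := by
      simp [row, hM]
    rw [this, Matrix.sub_apply]
  set OPT : ℝ := ∑ i, ‖row B i - μhat (Chat i)‖ ^ 2 with hOPTdef
  have hub : OPT ≤ F2 := hopt μ C
  set S := Finset.univ.filter fun i => C i = r ∧ Chat i ≠ r with hSdef
  have key : ∀ i ∈ S, 0.405 * Δ ^ 2 - ‖row B i - μ (C i)‖ ^ 2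
      ≤ ‖row B i - μhat (Chat i)‖ ^ 2 := by
    intro i hi
    rw [hSdef, Finset.mem_filter] at hi
    obtain ⟨-, hCr, hne⟩ := hi
    have hrs : r ≠ Chat i := fun h => hne h.symm
    have h1 : Δ ≤ ‖μ r - μ (Chat i)‖ := hsep r (Chat i) hrs
    have h2 : ‖μhat (Chat i) - μ (Chat i)‖ ≤ 0.1 * Δ := herr (Chat i)
    have h3 : ‖μ r - μ (Chat i)‖ ≤ ‖μ r - μhat (Chat i)‖ + ‖μhat (Chat i) - μ (Chat i)‖ :=
      norm_sub_le_norm_sub_add_norm_sub _ _ _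
    have hc : 0.9 * Δ ≤ ‖μ r - μhat (Chat i)‖ := by linarith
    have htri : ‖μ r - μhat (Chat i)‖ ≤ ‖μ r - row B i‖ + ‖row B i - μhat (Chat i)‖ :=
      norm_sub_le_norm_sub_add_norm_sub _ _ _
    have hb : ‖μ r - row B i‖ = ‖row B i - μ (C i)‖ := by
      rw [hCr, norm_sub_rev]
    rw [hb] at htri
    have ha : (0 : ℝ) ≤ ‖row B i - μhat (Chat i)‖ := norm_nonneg _
    have hbn : (0 : ℝ) ≤ ‖row B i - μ (C i)‖ := norm_nonneg _
    nlinarith [sq_nonneg (‖row B i - μ (C i)‖ - ‖row B i - μhat (Chat i)‖), hΔ.le]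
  have hsub1 : ∑ i ∈ S, ‖row B i - μhat (Chat i)‖ ^ 2 ≤ OPT :=
    Finset.sum_le_sum_of_subset_of_nonneg (Finset.subset_univ S)
      (fun i _ _ => by positivity)
  have hsub2 : ∑ i ∈ S, ‖row B i - μ (C i)‖ ^ 2 ≤ F2 :=
    Finset.sum_le_sum_of_subset_of_nonneg (Finset.subset_univ S)
      (fun i _ _ => by positivity)
  have hsumkey : ∑ i ∈ S, (0.405 * Δ ^ 2 - ‖row B i - μ (C i)‖ ^ 2)
      ≤ ∑ i ∈ S, ‖row B i - μhat (Chat i)‖ ^ 2 := Finset.sum_le_sum key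
  rw [Finset.sum_sub_distrib, Finset.sum_const, nsmul_eq_mul] at hsumkey
  have hmain : (S.card : ℝ) * (0.405 * Δ ^ 2) ≤ 2 * F2 := by linarith
  rw [hfrob, le_div_iff₀ (by positivity)]
  nlinarith [hΔ, Nat.cast_nonneg (α := ℝ) S.card]
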